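/- arXiv:math/0402364 — 2 statements merged into one kernel-verified Lean document; each statement's English description precedes it below -/
import Mathlib

section
/- Let K be a densely defined closed operator from E₁ to E₂ with trivial kernel, let S be the isometric closure of K(K*K)^{-1/2}. Then for every x in the domain of (K*K)^{-1/2}, one has K* S (K*K)^{-1/2} x = x. -/
open LinearPMap InnerProductSpace


section Aux

variable {E₁ E₂ : Type*}
  [NormedAddCommGroup E₁] [InnerProductSpace ℝ E₁] [CompleteSpace E₁]
  [NormedAddCommGroup E₂] [InnerProductSpace ℝ E₂] [CompleteSpace E₂]

/-- Symmetry of a self-adjoint `LinearPMap`. -/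
lemma aux_selfAdjoint_symm {R : E₁ →ₗ.[ℝ] E₁} (hR : _root_.IsSelfAdjoint R)
    (x y : R.domain) : ⟪(R x : E₁), (y : E₁)⟫_ℝ = ⟪(x : E₁), (R y : E₁)⟫_ℝ := by
  have hd := hR.dense_domain
  have heq : R.adjoint = R := hR
  obtain ⟨hdomeq, hvaleq⟩ := LinearPMap.ext_iff.mp heq
  have hx : (x : E₁) ∈ R.adjoint.domain := by rw [hdomeq]; exact x.2
  have h1 : R.adjoint ⟨(x : E₁), hx⟩ = R x := hvaleq (x := (x : E₁)) (hf := hx) (hg := x.2)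
  have h2 := LinearPMap.adjoint_isFormalAdjoint hd ⟨(x : E₁), hx⟩ y
  rw [h1] at h2
  exact h2

/-- Von Neumann: `1 + K* K` is surjective for closed densely defined `K`. -/
lemma aux_surj_one_add (K : E₁ →ₗ.[ℝ] E₂) (hdense : Dense (K.domain : Set E₁))
    (hclosed : K.IsClosed) (z : E₁) :
    ∃ (d : E₁) (hK : d ∈ K.domain) (hK2 : K ⟨d, hK⟩ ∈ K.adjoint.domain),
      d + K.adjoint ⟨K ⟨d, hK⟩, hK2⟩ = z := by
  set H := WithLp 2 (E₁ × E₂)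
  set e : H ≃ₗ[ℝ] E₁ × E₂ := WithLp.linearEquiv 2 ℝ (E₁ × E₂) with he
  set G : Submodule ℝ H := K.graph.comap (e : H →ₗ[ℝ] E₁ × E₂) with hG
  have hGc : IsClosed (G : Set H) := by
    have : (G : Set H) =
        (WithLp.prodContinuousLinearEquiv 2 ℝ E₁ E₂) ⁻¹' (K.graph : Set (E₁ × E₂)) := rfl
    rw [this]
    exact hclosed.preimage (WithLp.prodContinuousLinearEquiv 2 ℝ E₁ E₂).continuous
  haveI : CompleteSpace G := hGc.completeSpace_coe
  obtain ⟨g, hg, w, hw, hv⟩ := G.exists_add_mem_mem_orthogonal (e.symm (z, 0))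
  rw [Submodule.mem_comap] at hg
  rw [LinearPMap.mem_graph_iff] at hg
  obtain ⟨d, hd1, hd2⟩ := hg
  -- components of the decomposition
  have hcomp : (z, (0 : E₂)) = e g + e w := by
    have := congrArg e hv
    simpa using this
  have hz : z = (e g).1 + (e w).1 := congrArg Prod.fst hcomp
  have h0 : (0 : E₂) = (e g).2 + (e w).2 := congrArg Prod.snd hcomp
  have hwsnd : (e w).2 = -(e g).2 := by
    have := h0.symm
    linear_combination (norm := module) this
  -- orthogonality gives the adjoint relation
  have horth : ∀ x : K.domain, ⟪((x : E₁), K x).1, (e w).1⟫_ℝ + ⟪((x : E₁), K x).2, (e w).2⟫_ℝ = 0 := by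
    intro x
    have hmem : e.symm ((x : E₁), K x) ∈ G := by
      rw [Submodule.mem_comap]
      simp only [LinearEquiv.coe_coe, LinearEquiv.apply_symm_apply]
      exact K.mem_graph x
    have := (Submodule.mem_orthogonal G w).mp hw _ hmem
    rw [WithLp.prod_inner_apply] at this
    exact this
  have hadj : ∀ x : K.domain, ⟪(e w).1, (x : E₁)⟫_ℝ = ⟪(e g).2, K x⟫_ℝ := by
    intro x
    have h := horth x
    rw [hwsnd] at h
    simp only [inner_neg_right] at h
    have c1 : ⟪(e w).1, (x : E₁)⟫_ℝ = ⟪(x : E₁), (e w).1⟫_ℝ := real_inner_comm _ _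
    have c2 : ⟪(e g).2, (K x : E₂)⟫_ℝ = ⟪(K x : E₂), (e g).2⟫_ℝ := real_inner_comm _ _
    linarith
  have hmem2 : K ⟨d, d.2⟩ ∈ K.adjoint.domain := by
    have : (d : E₁) ∈ K.domain := d.2
    have hKd : K d = (e g).2 := hd2
    refine LinearPMap.mem_adjoint_domain_of_exists _ ⟨(e w).1, fun x => ?_⟩
    rw [show K (⟨(d : E₁), d.2⟩ : K.domain) = (e g).2 from hd2]
    exact hadj x
  refine ⟨(d : E₁), d.2, hmem2, ?_⟩
  have hval : K.adjoint ⟨K ⟨(d : E₁), d.2⟩, hmem2⟩ = (e w).1 := by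
    refine LinearPMap.adjoint_apply_eq hdense _ fun x => ?_
    rw [show ((⟨K ⟨(d : E₁), d.2⟩, hmem2⟩ : K.adjoint.domain) : E₂) = (e g).2 from hd2]
    exact hadj x
  rw [hval, show ((⟨(d:E₁), d.2⟩ : K.domain) : E₁) = (e g).1 from hd1]
  exact hz.symm

end Aux

/-- Let `K` be a densely defined closed operator from `E₁` to `E₂` with trivial
kernel, `R = (K*K)^{1/2}` and `S` the isometric closure of `K ∘ R⁻¹ = K (K*K)^{-1/2}`.  Then for
every `x` in the domain of `(K*K)^{-1/2}` (i.e. `x = R y`) one has `K* S (K*K)^{-1/2} x = x`,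
that is `K* (S y) = R y` for every `y ∈ dom R`. -/
theorem adjoint_comp_isometry_inv_sqrt
    {E₁ E₂ : Type*}
    [NormedAddCommGroup E₁] [InnerProductSpace ℝ E₁] [CompleteSpace E₁]
    [NormedAddCommGroup E₂] [InnerProductSpace ℝ E₂] [CompleteSpace E₂]
    (K : E₁ →ₗ.[ℝ] E₂)
    (hdense : Dense (K.domain : Set E₁))
    (hclosed : K.IsClosed)
    (hker : ∀ (x : K.domain), K x = 0 → (x : E₁) = 0)
    -- `R` plays the role of `(K*K)^{1/2}` :
    (R : E₁ →ₗ.[ℝ] E₁)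
    (hRsa : IsSelfAdjoint R)
    (hRpos : ∀ x : R.domain, 0 ≤ ⟪R x, (x : E₁)⟫_ℝ)
    (hdom : ∀ x : E₁,
      (∃ h : x ∈ R.domain, R ⟨x, h⟩ ∈ R.domain) ↔
      (∃ h : x ∈ K.domain, K ⟨x, h⟩ ∈ K.adjoint.domain))
    (hval : ∀ (x : E₁) (hR : x ∈ R.domain) (hR2 : R ⟨x, hR⟩ ∈ R.domain)
      (hK : x ∈ K.domain) (hK2 : K ⟨x, hK⟩ ∈ K.adjoint.domain),
      R ⟨R ⟨x, hR⟩, hR2⟩ = K.adjoint ⟨K ⟨x, hK⟩, hK2⟩)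
    -- `S` is the isometric closure of `K ∘ R⁻¹` :
    (S : E₁ →L[ℝ] E₂)
    (hSiso : ∀ y : E₁, ‖S y‖ = ‖y‖)
    (hSval : ∀ (x : E₁) (hK : x ∈ K.domain) (hR : x ∈ R.domain),
      S (R ⟨x, hR⟩) = K ⟨x, hK⟩) :
    ∀ y : R.domain, ∃ h : S (y : E₁) ∈ K.adjoint.domain,
      K.adjoint ⟨S (y : E₁), h⟩ = R y := by
  have hSinner : ∀ a b : E₁, ⟪S a, S b⟫_ℝ = ⟪a, b⟫_ℝ := fun a b =>
    LinearIsometry.inner_map_map ⟨(S : E₁ →ₗ[ℝ] E₂), hSiso⟩ a b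
  intro y
  -- Step B : the identity holds against vectors in the domain of `K* K`.
  have hB : ∀ (d : E₁) (hK : d ∈ K.domain) (hK2 : K ⟨d, hK⟩ ∈ K.adjoint.domain),
      ⟪S (y : E₁), K ⟨d, hK⟩⟫_ℝ = ⟪(R y : E₁), d⟫_ℝ := by
    intro d hK hK2
    obtain ⟨hR1, hR2⟩ := (hdom d).mpr ⟨hK, hK2⟩
    rw [← hSval d hK hR1, hSinner]
    have h1 : ⟪(R ⟨d, hR1⟩ : E₁), (y : E₁)⟫_ℝ = ⟪d, (R y : E₁)⟫_ℝ :=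
      aux_selfAdjoint_symm hRsa ⟨d, hR1⟩ y
    have c1 : ⟪(y : E₁), (R ⟨d, hR1⟩ : E₁)⟫_ℝ = ⟪(R ⟨d, hR1⟩ : E₁), (y : E₁)⟫_ℝ :=
      real_inner_comm _ _
    have c2 : ⟪(R y : E₁), d⟫_ℝ = ⟪d, (R y : E₁)⟫_ℝ := real_inner_comm _ _
    linarith
  -- The Hilbert space `E₁ ×[L²] E₂` and the graph of `K` inside it.
  set H := WithLp 2 (E₁ × E₂)
  set e : H ≃ₗ[ℝ] E₁ × E₂ := WithLp.linearEquiv 2 ℝ (E₁ × E₂) with he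
  set G : Submodule ℝ H := K.graph.comap (e : H →ₗ[ℝ] E₁ × E₂) with hG
  have hGc : IsClosed (G : Set H) := by
    have : (G : Set H) =
        (WithLp.prodContinuousLinearEquiv 2 ℝ E₁ E₂) ⁻¹' (K.graph : Set (E₁ × E₂)) := rfl
    rw [this]
    exact hclosed.preimage (WithLp.prodContinuousLinearEquiv 2 ℝ E₁ E₂).continuous
  haveI : CompleteSpace G := hGc.completeSpace_coe
  -- The candidate vector `(-R y, S y)`; we show it is orthogonal to the graph of `K`.
  set w₀ : H := e.symm (-(R y : E₁), S (y : E₁)) with hw₀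
  obtain ⟨a, ha, b, hb, hab⟩ := G.exists_add_mem_mem_orthogonal w₀
  have ha' := ha
  rw [Submodule.mem_comap, LinearPMap.mem_graph_iff] at ha'
  obtain ⟨x₀, hx1, hx2⟩ := ha'
  simp only [LinearEquiv.coe_coe] at hx1 hx2
  -- `a` is orthogonal to all pairs `(d, K d)` with `K d ∈ dom K*`.
  have haorth : ∀ (d : E₁) (hK : d ∈ K.domain) (hK2 : K ⟨d, hK⟩ ∈ K.adjoint.domain),
      ⟪(x₀ : E₁), d⟫_ℝ + ⟪(K x₀ : E₂), K ⟨d, hK⟩⟫_ℝ = 0 := by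
    intro d hK hK2
    set p : H := e.symm ((d, K ⟨d, hK⟩) : E₁ × E₂) with hp
    have hpG : p ∈ G := by
      rw [Submodule.mem_comap]
      simp only [LinearEquiv.coe_coe, hp, LinearEquiv.apply_symm_apply]
      exact K.mem_graph ⟨d, hK⟩
    have hbp : ⟪p, b⟫_ℝ = 0 := (Submodule.mem_orthogonal G b).mp hb _ hpG
    have hw₀p : ⟪p, w₀⟫_ℝ = 0 := by
      rw [hw₀, hp]
      rw [show (⟪(e.symm ((d, K ⟨d, hK⟩) : E₁ × E₂) : H),
            (e.symm ((-(R y : E₁), S (y : E₁)) : E₁ × E₂) : H)⟫_ℝ)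
          = ⟪d, -(R y : E₁)⟫_ℝ + ⟪(K ⟨d, hK⟩ : E₂), S (y : E₁)⟫_ℝ from rfl]
      have h1 := hB d hK hK2
      have c1 : ⟪(K ⟨d, hK⟩ : E₂), S (y : E₁)⟫_ℝ = ⟪S (y : E₁), (K ⟨d, hK⟩ : E₂)⟫_ℝ :=
        real_inner_comm _ _
      have c2 : ⟪d, (R y : E₁)⟫_ℝ = ⟪(R y : E₁), d⟫_ℝ := real_inner_comm _ _
      rw [inner_neg_right]
      linarith
    have hap : ⟪p, a⟫_ℝ = 0 := by
      have : ⟪p, w₀⟫_ℝ = ⟪p, a⟫_ℝ + ⟪p, b⟫_ℝ := by rw [hab, inner_add_right]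
      rw [hw₀p, hbp] at this
      linarith
    have hpa' : ⟪p, a⟫_ℝ = ⟪d, (e a).1⟫_ℝ + ⟪(K ⟨d, hK⟩ : E₂), (e a).2⟫_ℝ := rfl
    rw [hpa'] at hap
    rw [hx1, hx2]
    have c1 : ⟪(e a).1, d⟫_ℝ = ⟪d, (e a).1⟫_ℝ := real_inner_comm _ _
    have c2 : ⟪(e a).2, (K ⟨d, hK⟩ : E₂)⟫_ℝ = ⟪(K ⟨d, hK⟩ : E₂), (e a).2⟫_ℝ := real_inner_comm _ _
    linarith
  -- Using surjectivity of `1 + K* K`, deduce `a = 0`.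
  have hx₀0 : (x₀ : E₁) = 0 := by
    obtain ⟨d, hK, hK2, hsum⟩ := aux_surj_one_add K hdense hclosed (x₀ : E₁)
    have h1 := haorth d hK hK2
    have h2 : ⟪(K ⟨d, hK⟩ : E₂), (K x₀ : E₂)⟫_ℝ
        = ⟪(K.adjoint ⟨K ⟨d, hK⟩, hK2⟩ : E₁), (x₀ : E₁)⟫_ℝ :=
      (LinearPMap.adjoint_isFormalAdjoint hdense ⟨K ⟨d, hK⟩, hK2⟩ x₀).symm
    have h3 : ⟪(x₀ : E₁), (x₀ : E₁)⟫_ℝ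
        = ⟪(x₀ : E₁), d⟫_ℝ + ⟪(x₀ : E₁), (K.adjoint ⟨K ⟨d, hK⟩, hK2⟩ : E₁)⟫_ℝ := by
      rw [← inner_add_right, hsum]
    have c1 : ⟪(K x₀ : E₂), (K ⟨d, hK⟩ : E₂)⟫_ℝ = ⟪(K ⟨d, hK⟩ : E₂), (K x₀ : E₂)⟫_ℝ :=
      real_inner_comm _ _
    have c2 : ⟪(x₀ : E₁), (K.adjoint ⟨K ⟨d, hK⟩, hK2⟩ : E₁)⟫_ℝ
        = ⟪(K.adjoint ⟨K ⟨d, hK⟩, hK2⟩ : E₁), (x₀ : E₁)⟫_ℝ := real_inner_comm _ _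
    have h4 : ⟪(x₀ : E₁), (x₀ : E₁)⟫_ℝ = 0 := by linarith
    exact inner_self_eq_zero.mp h4
  have ha0 : a = 0 := by
    have hx₀' : x₀ = 0 := Subtype.ext hx₀0
    have hKx₀ : K x₀ = 0 := by rw [hx₀', LinearPMap.map_zero]
    have hea : e a = 0 := by
      rw [Prod.ext_iff]
      exact ⟨by rw [← hx1]; exact hx₀0, by rw [← hx2]; exact hKx₀⟩
    have := congrArg e.symm hea
    simpa using this
  have hw₀b : w₀ ∈ Gᗮ := by rw [hab, ha0, zero_add]; exact hb
  -- Conclude.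
  have hmain : ∀ x : K.domain, ⟪(R y : E₁), (x : E₁)⟫_ℝ = ⟪S (y : E₁), K x⟫_ℝ := by
    intro x
    have hmem : e.symm (((x : E₁), K x) : E₁ × E₂) ∈ G := by
      rw [Submodule.mem_comap]
      simp only [LinearEquiv.coe_coe, LinearEquiv.apply_symm_apply]
      exact K.mem_graph x
    have h := (Submodule.mem_orthogonal G w₀).mp hw₀b _ hmem
    have h' : ⟪(x : E₁), -(R y : E₁)⟫_ℝ + ⟪(K x : E₂), S (y : E₁)⟫_ℝ = 0 := h
    rw [inner_neg_right] at h'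
    have c1 : ⟪(R y : E₁), (x : E₁)⟫_ℝ = ⟪(x : E₁), (R y : E₁)⟫_ℝ := real_inner_comm _ _
    have c2 : ⟪S (y : E₁), (K x : E₂)⟫_ℝ = ⟪(K x : E₂), S (y : E₁)⟫_ℝ := real_inner_comm _ _
    linarith
  exact ⟨LinearPMap.mem_adjoint_domain_of_exists _ ⟨(R y : E₁), hmain⟩,
    LinearPMap.adjoint_apply_eq hdense _ hmain⟩
end

section
/- Let K be a self-adjoint Hilbert–Schmidt operator on an infinite-dimensional separable Hilbert space E with trivial kernel, with spectral projections e_K({λ}) for eigenvalues λ. Define g'₁(K) = Σ_{λ∈σ(K), λ≠0} λ h(K,λ), where h(K,λ) is the sum of an orthonormal basis of the eigenspace e_K({λ})E. Then g'₁(K) does not lie in the range of K. -/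
open Module Filter Topology Metric

local notation "⟪" x ", " y "⟫" => @inner ℝ _ _ x y

/-- Polarization bound: a symmetric operator's norm is controlled by its Rayleigh quotient. -/
lemma opNorm_le_of_rayleigh_bound
    {F : Type*} [NormedAddCommGroup F] [InnerProductSpace ℝ F]
    (T : F →L[ℝ] F) (hT : LinearMap.IsSymmetric (T : F →ₗ[ℝ] F)) {c : ℝ} (hc : 0 ≤ c)
    (H : ∀ x : F, ‖x‖ ≤ 1 → |⟪T x, x⟫| ≤ c) : ‖T‖ ≤ c := by
  -- first, |⟪T z, z⟫| ≤ c * ‖z‖ ^ 2 for all z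
  have H' : ∀ z : F, |⟪T z, z⟫| ≤ c * ‖z‖ ^ 2 := by
    intro z
    rcases eq_or_ne z 0 with rfl | hz
    · simp
    · have hz' : (0 : ℝ) < ‖z‖ := norm_pos_iff.mpr hz
      have h1 : ‖(‖z‖⁻¹ • z)‖ ≤ 1 := by
        rw [norm_smul, norm_inv, norm_norm, inv_mul_cancel₀ hz'.ne']
      have := H (‖z‖⁻¹ • z) h1
      rw [map_smul, real_inner_smul_left, real_inner_smul_right] at this
      rw [abs_mul, abs_mul, abs_inv, abs_norm] at this
      have h2 : |⟪T z, z⟫| = ‖z‖ ^ 2 * (‖z‖⁻¹ * (‖z‖⁻¹ * |⟪T z, z⟫|)) := by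
        field_simp
      rw [h2]
      calc ‖z‖ ^ 2 * (‖z‖⁻¹ * (‖z‖⁻¹ * |⟪T z, z⟫|)) ≤ ‖z‖ ^ 2 * c := by
            apply mul_le_mul_of_nonneg_left this (by positivity)
        _ = c * ‖z‖ ^ 2 := mul_comm _ _
  -- polarization: ⟪T x, y⟫ ≤ (c/2)(‖x‖² + ‖y‖²)
  have Hpol : ∀ x y : F, ⟪T x, y⟫ ≤ c / 2 * (‖x‖ ^ 2 + ‖y‖ ^ 2) := by
    intro x y
    have key : (4 : ℝ) * ⟪T x, y⟫ = ⟪T (x + y), x + y⟫ - ⟪T (x - y), x - y⟫ := by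
      have hsym : ⟪T y, x⟫ = ⟪T x, y⟫ := by
        rw [hT.apply_clm y x]; exact real_inner_comm _ _
      simp only [map_add, map_sub, inner_add_left, inner_add_right, inner_sub_left,
        inner_sub_right]
      linarith [hsym]
    have h1 : ⟪T (x + y), x + y⟫ ≤ c * ‖x + y‖ ^ 2 := (abs_le.mp (H' (x + y))).2
    have h2 : -(c * ‖x - y‖ ^ 2) ≤ ⟪T (x - y), x - y⟫ := (abs_le.mp (H' (x - y))).1
    have hpar : ‖x + y‖ * ‖x + y‖ + ‖x - y‖ * ‖x - y‖ =
        2 * (‖x‖ * ‖x‖ + ‖y‖ * ‖y‖) := by simpa only [sq] using parallelogram_law_with_norm ℝ x y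
    nlinarith [sq_nonneg (‖x + y‖), sq_nonneg (‖x - y‖)]
  apply ContinuousLinearMap.opNorm_le_of_unit_norm hc
  intro x hx
  rcases eq_or_ne (T x) 0 with hTx | hTx
  · simp [hTx, hc]
  · have hTx' : (0 : ℝ) < ‖T x‖ := norm_pos_iff.mpr hTx
    have := Hpol x (‖T x‖⁻¹ • T x)
    rw [real_inner_smul_right, real_inner_self_eq_norm_sq] at this
    rw [norm_smul, norm_inv, norm_norm, inv_mul_cancel₀ hTx'.ne'] at this
    have h3 : ‖T x‖⁻¹ * ‖T x‖ ^ 2 = ‖T x‖ := by field_simp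
    rw [h3, hx] at this
    linarith

/-- A nonzero compact symmetric operator on a real Hilbert space has a nonzero eigenvalue. -/
lemma exists_eigenvalue_of_compact_symmetric
    {F : Type*} [NormedAddCommGroup F] [InnerProductSpace ℝ F] [CompleteSpace F]
    (T : F →L[ℝ] F) (hT : LinearMap.IsSymmetric (T : F →ₗ[ℝ] F))
    (hc : IsCompactOperator T) (hne : T ≠ 0) :
    ∃ μ : ℝ, μ ≠ 0 ∧ Module.End.eigenspace (T : F →ₗ[ℝ] F) μ ≠ ⊥ := by
  set M : ℝ := ‖T‖ with hM_def
  have hM : 0 < M := norm_pos_iff.mpr hne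
  -- a maximizing sequence for the Rayleigh quotient
  have hseq : ∀ n : ℕ, ∃ x : F, ‖x‖ ≤ 1 ∧ M - 1 / (n + 1) < |⟪T x, x⟫| := by
    intro n
    by_contra hcon
    push_neg at hcon
    rcases le_or_gt 0 (M - 1 / (n + 1)) with hge | hlt
    · have := opNorm_le_of_rayleigh_bound T hT hge hcon
      have hpos : (0 : ℝ) < 1 / (n + 1) := by positivity
      rw [← hM_def] at this
      linarith
    · have := hcon 0 (by simp)
      simp only [map_zero, inner_zero_left, abs_zero] at this
      linarith
  choose x hx1 hx2 using hseq
  set a : ℕ → ℝ := fun n => ⟪T (x n), x n⟫ with ha_def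
  have haM : ∀ n, |a n| ≤ M := by
    intro n
    calc |a n| ≤ ‖T (x n)‖ * ‖x n‖ := abs_real_inner_le_norm _ _
      _ ≤ (M * ‖x n‖) * ‖x n‖ := by
          exact mul_le_mul_of_nonneg_right (T.le_opNorm _) (norm_nonneg _)
      _ ≤ (M * 1) * 1 := by
          apply mul_le_mul (mul_le_mul_of_nonneg_left (hx1 n) hM.le) (hx1 n) (norm_nonneg _)
          positivity
      _ = M := by ring
  have habs : Tendsto (fun n => |a n|) atTop (𝓝 M) := by
    have hlow : Tendsto (fun n : ℕ => M - 1 / (n + 1 : ℝ)) atTop (𝓝 M) := by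
      have : Tendsto (fun n : ℕ => 1 / (n + 1 : ℝ)) atTop (𝓝 0) :=
        tendsto_one_div_add_atTop_nhds_zero_nat
      simpa using tendsto_const_nhds.sub this
    exact tendsto_of_tendsto_of_tendsto_of_le_of_le hlow tendsto_const_nhds
      (fun n => (hx2 n).le) haM
  -- Bolzano–Weierstrass on the bounded sequence `a`
  obtain ⟨μ, -, φ, hφ, hμ⟩ :=
    tendsto_subseq_of_bounded (isBounded_Icc (-M) M)
      (x := a) (fun n => Set.mem_Icc.mpr (abs_le.mp (haM n)))
  have hμM : |μ| = M := by
    have h1 : Tendsto (fun n => |a (φ n)|) atTop (𝓝 |μ|) := hμ.abs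
    have h2 : Tendsto (fun n => |a (φ n)|) atTop (𝓝 M) := habs.comp hφ.tendsto_atTop
    exact tendsto_nhds_unique h1 h2
  have hμ0 : μ ≠ 0 := fun h0 => by rw [h0, abs_zero] at hμM; exact hM.ne hμM
  -- compactness: extract a convergent subsequence of `T (x (φ n))`
  have hcpt : IsCompact (closure ((T : F →ₗ[ℝ] F) '' closedBall 0 1)) :=
    IsCompactOperator.isCompact_closure_image_closedBall (f := (T : F →ₗ[ℝ] F)) hc 1
  have hmem' : ∀ n, T (x (φ n)) ∈ closure ((T : F →ₗ[ℝ] F) '' closedBall 0 1) := fun n =>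
    subset_closure ⟨x (φ n), by simpa [mem_closedBall_zero_iff] using hx1 (φ n), rfl⟩
  obtain ⟨y, -, ψ, hψ, hy⟩ := hcpt.tendsto_subseq hmem'
  set k : ℕ → F := fun n => x (φ (ψ n)) with hk_def
  have hTk : Tendsto (fun n => T (k n)) atTop (𝓝 y) := hy
  have hb : Tendsto (fun n => a (φ (ψ n))) atTop (𝓝 μ) := hμ.comp hψ.tendsto_atTop
  -- `T (k n) - μ • k n → 0`
  have hdiff : Tendsto (fun n => T (k n) - μ • k n) atTop (𝓝 0) := by
    rw [tendsto_zero_iff_norm_tendsto_zero]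
    have hsq : Tendsto (fun n => ‖T (k n) - μ • k n‖ ^ 2) atTop (𝓝 0) := by
      have hub : ∀ n, ‖T (k n) - μ • k n‖ ^ 2 ≤ M ^ 2 + μ ^ 2 - 2 * μ * a (φ (ψ n)) := by
        intro n
        have hexp : ‖T (k n) - μ • k n‖ ^ 2 =
            ‖T (k n)‖ ^ 2 - 2 * (μ * a (φ (ψ n))) + μ ^ 2 * ‖k n‖ ^ 2 := by
          rw [norm_sub_sq_real, real_inner_smul_right, norm_smul]
          simp only [ha_def, hk_def]
          rw [mul_pow]
          simp [Real.norm_eq_abs, sq_abs]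
        have h1 : ‖T (k n)‖ ^ 2 ≤ M ^ 2 := by
          have := T.le_opNorm (k n)
          have h2 : ‖T (k n)‖ ≤ M := le_trans this (by
            nlinarith [hx1 (φ (ψ n)), norm_nonneg (k n), hM])
          nlinarith [norm_nonneg (T (k n))]
        have hk1 : ‖k n‖ ≤ 1 := hx1 (φ (ψ n))
        have hk2 : ‖k n‖ ^ 2 ≤ 1 := by nlinarith [norm_nonneg (k n)]
        have h3 : μ ^ 2 * ‖k n‖ ^ 2 ≤ μ ^ 2 := by
          calc μ ^ 2 * ‖k n‖ ^ 2 ≤ μ ^ 2 * 1 :=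
                mul_le_mul_of_nonneg_left hk2 (sq_nonneg μ)
            _ = μ ^ 2 := mul_one _
        linarith
      have hto : Tendsto (fun n => M ^ 2 + μ ^ 2 - 2 * μ * a (φ (ψ n))) atTop (𝓝 0) := by
        have : Tendsto (fun n => M ^ 2 + μ ^ 2 - 2 * μ * a (φ (ψ n))) atTop
            (𝓝 (M ^ 2 + μ ^ 2 - 2 * μ * μ)) := by
          exact tendsto_const_nhds.sub ((hb.const_mul (2 * μ)))
        have heq : M ^ 2 + μ ^ 2 - 2 * μ * μ = 0 := by
          have : μ ^ 2 = M ^ 2 := by rw [← sq_abs μ, hμM]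
          nlinarith
        rwa [heq] at this
      exact squeeze_zero (fun n => by positivity) hub hto
    have := hsq.sqrt
    rw [Real.sqrt_zero] at this
    refine this.congr fun n => ?_
    rw [Real.sqrt_sq (norm_nonneg _)]
  -- so `μ • k n → y`, hence `k n → μ⁻¹ • y`
  have hμk : Tendsto (fun n => μ • k n) atTop (𝓝 y) := by
    have := hTk.sub hdiff
    simpa using this
  have hkv : Tendsto k atTop (𝓝 (μ⁻¹ • y)) := by
    have := hμk.const_smul μ⁻¹
    refine this.congr fun n => ?_
    rw [smul_smul, inv_mul_cancel₀ hμ0, one_smul]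
  set v : F := μ⁻¹ • y with hv_def
  have hTv : T v = μ • v := by
    have h1 : Tendsto (fun n => T (k n)) atTop (𝓝 (T v)) := (T.continuous.tendsto v).comp hkv
    have h2 : T v = y := tendsto_nhds_unique h1 hTk
    rw [h2, hv_def, smul_smul, mul_inv_cancel₀ hμ0, one_smul]
  have hvne : v ≠ 0 := by
    intro h0
    have h1 : Tendsto (fun n => (⟪T (k n), k n⟫ : ℝ)) atTop (𝓝 ⟪y, v⟫) :=
      (hTk.inner hkv)
    have h2 : (⟪y, v⟫ : ℝ) = μ := tendsto_nhds_unique h1 hb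
    rw [h0] at h2
    simp at h2
    exact hμ0 h2.symm
  exact ⟨μ, hμ0, Submodule.ne_bot_iff _ |>.mpr
    ⟨v, Module.End.mem_eigenspace_iff.mpr (by exact hTv), hvne⟩⟩



/-- Let `K` be a self-adjoint Hilbert–Schmidt operator with trivial kernel on an
infinite-dimensional separable Hilbert space `E`, with (distinct, nonzero) eigenvalues `lam n`
exhausting the nonzero spectrum, each of finite multiplicity, and let `h n` be the sum of an
orthonormal basis of the `lam n`-eigenspace (so `h n` lies in the eigenspace and
`‖h n‖² = dim(eigenspace)`).  Then `g'₁(K) = Σ_n lam n • h n` does not lie in the range of `K`. -/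
theorem eigen_sum_not_mem_range
    {E : Type*} [NormedAddCommGroup E] [InnerProductSpace ℝ E] [CompleteSpace E]
    [TopologicalSpace.SeparableSpace E]
    (hE : ¬ FiniteDimensional ℝ E)
    (K : E →L[ℝ] E)
    (hsa : IsSelfAdjoint K)
    (hcompact : IsCompactOperator K)
    (hker : Function.Injective K)
    (lam : ℕ → ℝ)
    (hlam_ne : ∀ n, lam n ≠ 0)
    (hlam_inj : Function.Injective lam)
    -- the `lam n` exhaust the nonzero eigenvalues of `K` :
    (hcomplete : ∀ μ : ℝ, μ ≠ 0 →
      Module.End.eigenspace (K : E →ₗ[ℝ] E) μ ≠ ⊥ → ∃ n, lam n = μ)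
    (hfin : ∀ n, FiniteDimensional ℝ (Module.End.eigenspace (K : E →ₗ[ℝ] E) (lam n)))
    (h : ℕ → E)
    (hmem : ∀ n, h n ∈ Module.End.eigenspace (K : E →ₗ[ℝ] E) (lam n))
    (hnorm : ∀ n, ‖h n‖ ^ 2 =
      (Module.finrank ℝ (Module.End.eigenspace (K : E →ₗ[ℝ] E) (lam n)) : ℝ))
    -- `K` is Hilbert–Schmidt :
    (hHS : Summable (fun n => (lam n) ^ 2 *
      (Module.finrank ℝ (Module.End.eigenspace (K : E →ₗ[ℝ] E) (lam n)) : ℝ)))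
    -- the series defining `g'₁(K)` converges :
    (hconv : Summable (fun n => lam n • h n)) :
    (∑' n, lam n • h n) ∉ Set.range K := by
  classical
  rintro ⟨x, hx⟩
  have hsym : LinearMap.IsSymmetric (K : E →ₗ[ℝ] E) := hsa.isSymmetric
  -- eigenvectors for distinct eigenvalues are orthogonal
  have horth : ∀ m n : ℕ, m ≠ n → ⟪h m, h n⟫ = 0 := by
    intro m n hmn
    exact hsym.orthogonalFamily_eigenspaces (hlam_inj.ne hmn) ⟨h m, hmem m⟩ ⟨h n, hmem n⟩
  have hKh : ∀ n, K (h n) = lam n • h n := fun n => Module.End.mem_eigenspace_iff.mp (hmem n)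
  -- key computation : ⟪h m, x⟫ = ‖h m‖²
  have key : ∀ m, ⟪h m, x⟫ = ‖h m‖ ^ 2 := by
    intro m
    have h1 : HasSum (fun n => (⟪h m, lam n • h n⟫ : ℝ)) ⟪h m, K x⟫ := by
      rw [hx]
      exact hconv.hasSum.mapL (innerSL ℝ (h m))
    have h2 : (⟪h m, K x⟫ : ℝ) = lam m * ‖h m‖ ^ 2 := by
      rw [← h1.tsum_eq, tsum_eq_single m]
      · rw [real_inner_smul_right, real_inner_self_eq_norm_sq]
      · intro n hnm
        rw [real_inner_smul_right, horth m n (Ne.symm hnm), mul_zero]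
    have h3 : (⟪h m, K x⟫ : ℝ) = lam m * ⟪h m, x⟫ := by
      rw [← hsym.apply_clm (h m) x, hKh m, real_inner_smul_left]
    exact mul_left_cancel₀ (hlam_ne m) (h3.symm.trans h2)
  -- Bessel : only finitely many `h n` are nonzero
  have hfinS : {n : ℕ | h n ≠ 0}.Finite := by
    by_contra hinf
    have hS : {n : ℕ | h n ≠ 0}.Infinite := hinf
    haveI := hS.to_subtype
    set v : {n : ℕ | h n ≠ 0} → E := fun i => (‖h i‖⁻¹ : ℝ) • h i with hv_def
    have hv : Orthonormal ℝ v := by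
      constructor
      · intro i
        rw [hv_def, norm_smul, norm_inv, norm_norm,
          inv_mul_cancel₀ (norm_ne_zero_iff.mpr i.2)]
      · intro i j hij
        have hij' : (i : ℕ) ≠ (j : ℕ) := fun e => hij (Subtype.ext e)
        simp only [hv_def, real_inner_smul_left, real_inner_smul_right]
        rw [horth i j hij', mul_zero, mul_zero]
    obtain ⟨t, ht⟩ := Infinite.exists_subset_card_eq {n : ℕ | h n ≠ 0}
      (Nat.floor (‖x‖ ^ 2) + 1)
    have hbessel : ∑ i ∈ t, ‖(⟪v i, x⟫ : ℝ)‖ ^ 2 ≤ ‖x‖ ^ 2 :=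
      hv.sum_inner_products_le x
    have hterm : ∀ i : {n : ℕ | h n ≠ 0}, (1 : ℝ) ≤ ‖(⟪v i, x⟫ : ℝ)‖ ^ 2 := by
      intro i
      have hne : ‖h i‖ ≠ 0 := norm_ne_zero_iff.mpr i.2
      have hinner : (⟪v i, x⟫ : ℝ) = ‖h i‖ := by
        rw [hv_def]
        simp only
        rw [real_inner_smul_left, key i, sq]
        field_simp
      rw [hinner, norm_norm, hnorm i]
      haveI := hfin (i : ℕ)
      have hnt : Nontrivial (Module.End.eigenspace (K : E →ₗ[ℝ] E) (lam i)) :=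
        nontrivial_of_ne ⟨h i, hmem i⟩ 0 (by
          simp only [ne_eq, Submodule.mk_eq_zero]
          exact i.2)
      have hpos : 0 < Module.finrank ℝ (Module.End.eigenspace (K : E →ₗ[ℝ] E) (lam i)) :=
        Module.finrank_pos_iff.mpr hnt
      exact_mod_cast Nat.one_le_iff_ne_zero.mpr hpos.ne'
    have hcard : (t.card : ℝ) ≤ ‖x‖ ^ 2 := by
      calc (t.card : ℝ) = ∑ _i ∈ t, (1 : ℝ) := by simp
        _ ≤ ∑ i ∈ t, ‖(⟪v i, x⟫ : ℝ)‖ ^ 2 := Finset.sum_le_sum fun i _ => hterm i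
        _ ≤ ‖x‖ ^ 2 := hbessel
    rw [ht] at hcard
    have := Nat.lt_floor_add_one (‖x‖ ^ 2)
    push_cast at hcard
    linarith
  -- the span of all eigenspaces is finite-dimensional
  set W : Submodule ℝ E := ⨆ μ : ℝ, Module.End.eigenspace (K : E →ₗ[ℝ] E) μ with hW
  haveI hWfd : FiniteDimensional ℝ W := by
    have hle : W ≤ hfinS.toFinset.sup
        (fun n => Module.End.eigenspace (K : E →ₗ[ℝ] E) (lam n)) := by
      rw [hW]
      apply iSup_le
      intro μ
      by_cases hbot : Module.End.eigenspace (K : E →ₗ[ℝ] E) μ = ⊥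
      · rw [hbot]; exact bot_le
      · have hμ0 : μ ≠ 0 := by
          rintro rfl
          apply hbot
          rw [Module.End.eigenspace_zero, LinearMap.ker_eq_bot]
          exact hker
        obtain ⟨n, rfl⟩ := hcomplete μ hμ0 hbot
        have hn : n ∈ hfinS.toFinset := by
          rw [Set.Finite.mem_toFinset]
          intro h0
          apply hbot
          haveI := hfin n
          have h5 : ‖h n‖ ^ 2 = (0 : ℝ) := by rw [h0]; simp
          rw [hnorm n] at h5
          have h4 : Module.finrank ℝ (Module.End.eigenspace (K : E →ₗ[ℝ] E) (lam n)) = 0 := by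
            exact_mod_cast h5
          exact Submodule.finrank_eq_zero.mp h4
        exact Finset.le_sup (f := fun n => Module.End.eigenspace (K : E →ₗ[ℝ] E) (lam n)) hn
    exact Submodule.finiteDimensional_of_le hle
  haveI hWc : CompleteSpace W := FiniteDimensional.complete ℝ W
  -- the orthogonal complement of `W` is trivial, by the compact spectral argument
  have hWbot : Wᗮ = ⊥ := by
    by_contra hne'
    obtain ⟨v₀, hv₀W, hv₀⟩ := (Submodule.ne_bot_iff _).mp hne'
    haveI : CompleteSpace (Wᗮ : Submodule ℝ E) :=
      (Submodule.isClosed_orthogonal W).completeSpace_coe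
    have hinv : ∀ v ∈ Wᗮ, K v ∈ Wᗮ := fun v hv =>
      hsym.orthogonalComplement_iSup_eigenspaces_invariant hv
    set T' : (Wᗮ : Submodule ℝ E) →L[ℝ] (Wᗮ : Submodule ℝ E) :=
      { toLinearMap := (K : E →ₗ[ℝ] E).restrict hinv
        cont := Continuous.subtype_mk (K.continuous.comp continuous_subtype_val) _ } with hT'
    have hT'sym : LinearMap.IsSymmetric
        (T' : (Wᗮ : Submodule ℝ E) →ₗ[ℝ] (Wᗮ : Submodule ℝ E)) :=
      hsym.restrict_invariant hinv
    have hT'c : IsCompactOperator T' :=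
      IsCompactOperator.restrict' (f := (K : E →ₗ[ℝ] E)) hcompact hinv
    have hT'ne : T' ≠ 0 := by
      intro h0
      have h1 : T' ⟨v₀, hv₀W⟩ = 0 := by rw [h0]; rfl
      have h2 : K v₀ = 0 := congrArg Subtype.val h1
      exact hv₀ (hker (by rw [h2, map_zero]))
    obtain ⟨μ, hμ0, hμbot⟩ := exists_eigenvalue_of_compact_symmetric T' hT'sym hT'c hT'ne
    obtain ⟨w, hw, hwne⟩ := (Submodule.ne_bot_iff _).mp hμbot
    have hKw : K (w : E) = μ • (w : E) := by
      have h6 := Module.End.mem_eigenspace_iff.mp hw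
      exact congrArg Subtype.val h6
    have hwW : (w : E) ∈ W :=
      le_iSup (fun μ => Module.End.eigenspace (K : E →ₗ[ℝ] E) μ) μ
        (Module.End.mem_eigenspace_iff.mpr hKw)
    have hzero : (w : E) = 0 := by
      have h7 := w.2
      rw [Submodule.mem_orthogonal] at h7
      exact inner_self_eq_zero.mp (h7 _ hwW)
    exact hwne (Submodule.coe_eq_zero.mp hzero)
  -- hence `W = ⊤` and `E` is finite-dimensional, contradiction
  have hWtop : W = ⊤ := by
    have h8 := Submodule.orthogonal_orthogonal W
    rw [hWbot, Submodule.bot_orthogonal_eq_top] at h8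
    exact h8.symm
  apply hE
  rw [hWtop] at hWfd
  exact (Submodule.topEquiv : (⊤ : Submodule ℝ E) ≃ₗ[ℝ] E).finiteDimensional
end
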